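/- arXiv:1706.02450 — 3 statements merged into one kernel-verified Lean document; each statement's English description precedes it below -/
import Mathlib

section
/- Let ν > 0 and let λ : ℕ → ℝ be a sequence such that λ i ≥ λ₀ for all i, for some constant λ₀ > 0. Assume that for every t > 0 the series θ(t) := ∑_{i=0}^∞ exp(−λ_i t) converges, and that there exist real coefficients c_0, c_1, c_2, … such that for every j ∈ ℕ there is a constant C_j > 0 with |θ(t) − t^{−ν/2}(c_0 + c_1 t + ⋯ + c_j t^j)| ≤ C_j t^{j+1−ν/2} for all t ∈ (0,1]. Then the series ∑_{i=0}^∞ λ_i^{−s} converges absolutely for every s ∈ ℂ with Re s > ν/2, and there exists a function F : ℂ → ℂ that is meromorphic on all of ℂ and satisfies F(s) = ∑_{i=0}^∞ λ_i^{−s} for every s with Re s > ν/2. -/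
open MeasureTheory Set Filter Asymptotics Topology

noncomputable def specTheta (lam : ℕ → ℝ) (t : ℝ) : ℝ :=
  (∑' i, ENNReal.ofReal (Real.exp (-(lam i) * t))).toReal

noncomputable def specF (lam : ℕ → ℝ) (a : ℝ) (c : ℕ → ℝ) (j : ℕ) : ℝ → ℂ :=
  Set.indicator (Set.Ioc 0 1)
    (fun t => ((specTheta lam t - t ^ (-a) * ∑ k ∈ Finset.range (j+1), c k * t ^ k : ℝ) : ℂ))

noncomputable def specG (lam : ℕ → ℝ) : ℝ → ℂ :=
  Set.indicator (Set.Ioi 1) (fun t => ((specTheta lam t : ℝ) : ℂ))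

variable {lam : ℕ → ℝ} {lam0 a : ℝ} {c : ℕ → ℝ}

lemma specTheta_eq (hθ : ∀ t : ℝ, 0 < t → Summable fun i => Real.exp (-(lam i) * t))
    {t : ℝ} (ht : 0 < t) : specTheta lam t = ∑' i, Real.exp (-(lam i) * t) := by
  rw [specTheta, ← ENNReal.ofReal_tsum_of_nonneg (fun i => (Real.exp_pos _).le) (hθ t ht),
    ENNReal.toReal_ofReal (tsum_nonneg fun i => (Real.exp_pos _).le)]

lemma specTheta_nonneg (t : ℝ) : 0 ≤ specTheta lam t := ENNReal.toReal_nonneg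

lemma specTheta_meas : Measurable (specTheta lam) := by
  apply ENNReal.measurable_toReal.comp
  exact Measurable.ennreal_tsum fun i =>
    ENNReal.measurable_ofReal.comp
      ((Real.continuous_exp.comp ((continuous_const.mul continuous_id))).measurable)

lemma specTheta_decay (hθ : ∀ t : ℝ, 0 < t → Summable fun i => Real.exp (-(lam i) * t))
    (hlam0 : 0 < lam0) (hge : ∀ i, lam0 ≤ lam i) {t : ℝ} (ht : 1 ≤ t) :
    specTheta lam t ≤ (specTheta lam 1 * Real.exp lam0) * Real.exp (-lam0 * t) := by
  have ht0 : (0:ℝ) < t := lt_of_lt_of_le one_pos ht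
  have hs1 : Summable fun i => Real.exp (-(lam i) * 1) := hθ 1 one_pos
  rw [specTheta_eq hθ ht0, specTheta_eq hθ one_pos]
  have key : ∀ i, Real.exp (-(lam i) * t) ≤ Real.exp (-(lam i) * 1) * Real.exp (-lam0 * (t - 1)) := by
    intro i
    rw [← Real.exp_add]
    apply Real.exp_le_exp.mpr
    nlinarith [hge i, hlam0, sub_nonneg.mpr ht]
  calc ∑' i, Real.exp (-(lam i) * t)
      ≤ ∑' i, Real.exp (-(lam i) * 1) * Real.exp (-lam0 * (t - 1)) :=
        (hθ t ht0).tsum_le_tsum key (hs1.mul_right _)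
    _ = (∑' i, Real.exp (-(lam i) * 1)) * Real.exp (-lam0 * (t - 1)) := tsum_mul_right
    _ = (∑' i, Real.exp (-(lam i) * 1)) * Real.exp lam0 * Real.exp (-lam0 * t) := by
        rw [show -lam0 * (t - 1) = lam0 + -lam0 * t by ring, Real.exp_add]; ring

lemma specTheta_small (hθ : ∀ t : ℝ, 0 < t → Summable fun i => Real.exp (-(lam i) * t))
    {C0 : ℝ} (hC0 : 0 ≤ C0)
    (h : ∀ t ∈ Set.Ioc (0:ℝ) 1,
      |(∑' i, Real.exp (-(lam i) * t)) - t ^ (-a) * ∑ k ∈ Finset.range 1, c k * t ^ k| ≤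
        C0 * t ^ ((0:ℕ) + 1 - a : ℝ))
    {t : ℝ} (ht : t ∈ Set.Ioc (0:ℝ) 1) :
    specTheta lam t ≤ (|c 0| + C0) * t ^ (-a) := by
  have h1 := h t ht
  rw [Finset.sum_range_one, pow_zero, mul_one] at h1
  rw [specTheta_eq hθ ht.1]
  have h2 : t ^ ((0:ℕ) + 1 - a : ℝ) = t * t ^ (-a) := by
    rw [show ((0:ℕ) + 1 - a : ℝ) = 1 + -a by push_cast; ring, Real.rpow_add ht.1, Real.rpow_one]
  rw [h2] at h1
  have h3 : 0 < t ^ (-a) := Real.rpow_pos_of_pos ht.1 _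
  have h4 := abs_le.mp h1
  nlinarith [le_abs_self (c 0), ht.1, ht.2, h4.2,
    mul_nonneg (mul_nonneg (sub_nonneg.mpr ht.2) hC0) h3.le,
    mul_nonneg (sub_nonneg.mpr (le_abs_self (c 0))) h3.le]

lemma specF_meas (j : ℕ) : Measurable (specF lam a c j) := by
  apply Measurable.indicator _ measurableSet_Ioc
  apply Complex.measurable_ofReal.comp
  exact specTheta_meas.sub ((by measurability : Measurable fun t : ℝ => t ^ (-a)).mul (by fun_prop))

lemma specG_meas : Measurable (specG lam) := by
  apply Measurable.indicator _ measurableSet_Ioi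
  exact Complex.measurable_ofReal.comp specTheta_meas

lemma specF_bound (hθ : ∀ t : ℝ, 0 < t → Summable fun i => Real.exp (-(lam i) * t))
    {j : ℕ} {Cj : ℝ} (hCj : 0 ≤ Cj)
    (h : ∀ t ∈ Set.Ioc (0:ℝ) 1,
      |(∑' i, Real.exp (-(lam i) * t)) - t ^ (-a) * ∑ k ∈ Finset.range (j+1), c k * t ^ k| ≤
        Cj * t ^ ((j:ℝ) + 1 - a)) (t : ℝ) :
    ‖specF lam a c j t‖ ≤ Cj * ‖t ^ ((j:ℝ) + 1 - a)‖ := by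
  by_cases ht : t ∈ Set.Ioc (0:ℝ) 1
  · rw [specF, Set.indicator_of_mem ht, Complex.norm_real, Real.norm_eq_abs, Real.norm_eq_abs,
      abs_of_nonneg (Real.rpow_nonneg ht.1.le _), specTheta_eq hθ ht.1]
    exact h t ht
  · rw [specF, Set.indicator_of_notMem ht, norm_zero]
    positivity

lemma specG_bound (hθ : ∀ t : ℝ, 0 < t → Summable fun i => Real.exp (-(lam i) * t))
    (hlam0 : 0 < lam0) (hge : ∀ i, lam0 ≤ lam i) (t : ℝ) :
    ‖specG lam t‖ ≤ (specTheta lam 1 * Real.exp lam0) * ‖Real.exp (-lam0 * t)‖ := by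
  have hM : 0 ≤ specTheta lam 1 * Real.exp lam0 :=
    mul_nonneg ENNReal.toReal_nonneg (Real.exp_pos _).le
  by_cases ht : t ∈ Set.Ioi (1:ℝ)
  · rw [specG, Set.indicator_of_mem ht, Complex.norm_real, Real.norm_eq_abs, Real.norm_eq_abs,
      abs_of_nonneg (specTheta_nonneg t), abs_of_nonneg (Real.exp_pos _).le]
    exact specTheta_decay hθ hlam0 hge (le_of_lt ht)
  · rw [specG, Set.indicator_of_notMem ht, norm_zero]
    positivity


lemma specF_isBigO_top (j : ℕ) (r : ℝ) :
    specF lam a c j =O[atTop] fun t : ℝ => t ^ r := by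
  rw [isBigO_iff]
  refine ⟨0, ?_⟩
  filter_upwards [eventually_gt_atTop (1:ℝ)] with t ht
  have hnm : t ∉ Set.Ioc (0:ℝ) 1 := fun hm => absurd hm.2 (not_le.mpr ht)
  rw [specF, Set.indicator_of_notMem hnm]
  simp

lemma specF_isBigO_zero (hθ : ∀ t : ℝ, 0 < t → Summable fun i => Real.exp (-(lam i) * t))
    {j : ℕ} {Cj : ℝ} (hCj : 0 ≤ Cj)
    (h : ∀ t ∈ Set.Ioc (0:ℝ) 1,
      |(∑' i, Real.exp (-(lam i) * t)) - t ^ (-a) * ∑ k ∈ Finset.range (j+1), c k * t ^ k| ≤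
        Cj * t ^ ((j:ℝ) + 1 - a)) :
    specF lam a c j =O[𝓝[>] (0:ℝ)] fun t : ℝ => t ^ ((j:ℝ) + 1 - a) :=
  IsBigO.of_bound Cj (Eventually.of_forall (specF_bound hθ hCj h))

lemma specF_locInt (hθ : ∀ t : ℝ, 0 < t → Summable fun i => Real.exp (-(lam i) * t))
    {j : ℕ} {Cj : ℝ} (hCj : 0 ≤ Cj)
    (h : ∀ t ∈ Set.Ioc (0:ℝ) 1,
      |(∑' i, Real.exp (-(lam i) * t)) - t ^ (-a) * ∑ k ∈ Finset.range (j+1), c k * t ^ k| ≤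
        Cj * t ^ ((j:ℝ) + 1 - a)) :
    LocallyIntegrableOn (specF lam a c j) (Set.Ioi 0) := by
  have hb : LocallyIntegrableOn (fun t : ℝ => Cj * t ^ ((j:ℝ) + 1 - a)) (Set.Ioi 0) := by
    refine ContinuousOn.locallyIntegrableOn ?_ measurableSet_Ioi
    exact continuousOn_const.mul (fun t ht =>
      (Real.continuousAt_rpow_const t _ (Or.inl (ne_of_gt ht))).continuousWithinAt)
  refine hb.mono (specF_meas j).aestronglyMeasurable (ae_of_all _ fun t => ?_)
  calc ‖specF lam a c j t‖ ≤ Cj * ‖t ^ ((j:ℝ) + 1 - a)‖ := specF_bound hθ hCj h t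
    _ = ‖Cj * t ^ ((j:ℝ) + 1 - a)‖ := by
        rw [Real.norm_eq_abs, Real.norm_eq_abs, abs_mul, abs_of_nonneg hCj]

lemma specF_mellin_conv (hθ : ∀ t : ℝ, 0 < t → Summable fun i => Real.exp (-(lam i) * t))
    {j : ℕ} {Cj : ℝ} (hCj : 0 ≤ Cj)
    (h : ∀ t ∈ Set.Ioc (0:ℝ) 1,
      |(∑' i, Real.exp (-(lam i) * t)) - t ^ (-a) * ∑ k ∈ Finset.range (j+1), c k * t ^ k| ≤
        Cj * t ^ ((j:ℝ) + 1 - a)) {s : ℂ} (hs : a - ((j:ℝ) + 1) < s.re) :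
    MellinConvergent (specF lam a c j) s := by
  refine mellinConvergent_of_isBigO_rpow (specF_locInt hθ hCj h)
    (specF_isBigO_top j (-(s.re + 1))) (lt_add_one _) ?_ hs
  simpa [neg_sub] using specF_isBigO_zero hθ hCj h

lemma specF_mellin_diff (hθ : ∀ t : ℝ, 0 < t → Summable fun i => Real.exp (-(lam i) * t))
    {j : ℕ} {Cj : ℝ} (hCj : 0 ≤ Cj)
    (h : ∀ t ∈ Set.Ioc (0:ℝ) 1,
      |(∑' i, Real.exp (-(lam i) * t)) - t ^ (-a) * ∑ k ∈ Finset.range (j+1), c k * t ^ k| ≤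
        Cj * t ^ ((j:ℝ) + 1 - a)) {s : ℂ} (hs : a - ((j:ℝ) + 1) < s.re) :
    DifferentiableAt ℂ (mellin (specF lam a c j)) s := by
  refine mellin_differentiableAt_of_isBigO_rpow (specF_locInt hθ hCj h)
    (specF_isBigO_top j (-(s.re + 1))) (lt_add_one _) ?_ hs
  simpa [neg_sub] using specF_isBigO_zero hθ hCj h

lemma specG_isBigO_top (hθ : ∀ t : ℝ, 0 < t → Summable fun i => Real.exp (-(lam i) * t))
    (hlam0 : 0 < lam0) (hge : ∀ i, lam0 ≤ lam i) :
    specG lam =O[atTop] fun t : ℝ => Real.exp (-lam0 * t) :=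
  IsBigO.of_bound _ (Eventually.of_forall (specG_bound hθ hlam0 hge))

lemma specG_isBigO_zero (b : ℝ) : specG lam =O[𝓝[>] (0:ℝ)] fun t : ℝ => t ^ (-b) := by
  rw [isBigO_iff]
  refine ⟨0, ?_⟩
  filter_upwards [Ioo_mem_nhdsGT_of_mem (by simp : (0:ℝ) ∈ Set.Ico (0:ℝ) 1)] with t ht
  have hnm : t ∉ Set.Ioi (1:ℝ) := fun hm => absurd ht.2 (not_lt.mpr (le_of_lt hm))
  rw [specG, Set.indicator_of_notMem hnm]
  simp

lemma specG_locInt (hθ : ∀ t : ℝ, 0 < t → Summable fun i => Real.exp (-(lam i) * t))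
    (hlam0 : 0 < lam0) (hge : ∀ i, lam0 ≤ lam i) :
    LocallyIntegrableOn (specG lam) (Set.Ioi 0) := by
  have hM : 0 ≤ specTheta lam 1 * Real.exp lam0 :=
    mul_nonneg (specTheta_nonneg 1) (Real.exp_pos _).le
  have hb : LocallyIntegrableOn
      (fun t : ℝ => (specTheta lam 1 * Real.exp lam0) * Real.exp (-lam0 * t)) (Set.Ioi 0) :=
    ((continuous_const.mul (Real.continuous_exp.comp
      (continuous_const.mul continuous_id))).locallyIntegrable).locallyIntegrableOn _
  refine hb.mono specG_meas.aestronglyMeasurable (ae_of_all _ fun t => ?_)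
  calc ‖specG lam t‖ ≤ (specTheta lam 1 * Real.exp lam0) * ‖Real.exp (-lam0 * t)‖ :=
        specG_bound hθ hlam0 hge t
    _ = ‖(specTheta lam 1 * Real.exp lam0) * Real.exp (-lam0 * t)‖ := by
        rw [Real.norm_eq_abs, Real.norm_eq_abs, abs_mul, abs_of_nonneg hM]

lemma specG_mellin_conv (hθ : ∀ t : ℝ, 0 < t → Summable fun i => Real.exp (-(lam i) * t))
    (hlam0 : 0 < lam0) (hge : ∀ i, lam0 ≤ lam i) (s : ℂ) :
    MellinConvergent (specG lam) s :=
  mellinConvergent_of_isBigO_rpow_exp hlam0 (specG_locInt hθ hlam0 hge)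
    (specG_isBigO_top hθ hlam0 hge) (specG_isBigO_zero (s.re - 1)) (by linarith)

lemma specG_mellin_diff (hθ : ∀ t : ℝ, 0 < t → Summable fun i => Real.exp (-(lam i) * t))
    (hlam0 : 0 < lam0) (hge : ∀ i, lam0 ≤ lam i) (s : ℂ) :
    DifferentiableAt ℂ (mellin (specG lam)) s :=
  mellin_differentiableAt_of_isBigO_rpow_exp hlam0 (specG_locInt hθ hlam0 hge)
    (specG_isBigO_top hθ hlam0 hge) (specG_isBigO_zero (s.re - 1)) (by linarith)

lemma rpow_exp_integrableOn {σ r : ℝ} (hσ : 0 < σ) (hr : 0 < r) :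
    IntegrableOn (fun t : ℝ => t ^ (σ - 1) * Real.exp (-r * t)) (Set.Ioi 0) := by
  refine mellin_convergent_of_isBigO_scalar (a := σ + 1) (b := 0) ?_ ?_ (by linarith) ?_ hσ
  · exact ((Real.continuous_exp.comp (continuous_const.mul continuous_id)).locallyIntegrable
      ).locallyIntegrableOn _
  · exact (isLittleO_exp_neg_mul_rpow_atTop hr (-(σ + 1))).isBigO
  · rw [isBigO_iff]
    refine ⟨1, ?_⟩
    filter_upwards [self_mem_nhdsWithin] with t (ht : 0 < t)
    rw [neg_zero, Real.rpow_zero]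
    simp only [Real.norm_eq_abs, abs_of_nonneg (Real.exp_pos _).le, norm_one, mul_one,
      abs_one]
    calc Real.exp (-r * t) ≤ Real.exp 0 := Real.exp_le_exp.mpr (by nlinarith)
      _ = 1 := Real.exp_zero

lemma rpow_exp_integral {σ r : ℝ} (hσ : 0 < σ) (hr : 0 < r) :
    ∫ t in Set.Ioi (0:ℝ), t ^ (σ - 1) * Real.exp (-r * t) = r ^ (-σ) * Real.Gamma σ := by
  have h := Real.integral_rpow_mul_exp_neg_mul_Ioi hσ hr
  simp_rw [← neg_mul] at h
  rw [h, one_div, Real.inv_rpow hr.le, Real.rpow_neg hr.le]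

lemma spec_summable (hθ : ∀ t : ℝ, 0 < t → Summable fun i => Real.exp (-(lam i) * t))
    (hlam0 : 0 < lam0) (hge : ∀ i, lam0 ≤ lam i) (ha : 0 < a)
    {C0 : ℝ} (hC0 : 0 ≤ C0)
    (h : ∀ t ∈ Set.Ioc (0:ℝ) 1,
      |(∑' i, Real.exp (-(lam i) * t)) - t ^ (-a) * ∑ k ∈ Finset.range 1, c k * t ^ k| ≤
        C0 * t ^ ((0:ℕ) + 1 - a : ℝ))
    {σ : ℝ} (hσ : a < σ) : Summable fun i => lam i ^ (-σ) := by
  have hpos : ∀ i, 0 < lam i := fun i => lt_of_lt_of_le hlam0 (hge i)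
  have hσ0 : 0 < σ := lt_trans ha hσ
  have hgam : 0 < Real.Gamma σ := Real.Gamma_pos_of_pos hσ0
  set K := |c 0| + C0 with hK
  have hKnn : 0 ≤ K := by positivity
  set M1 := specTheta lam 1 * Real.exp lam0 with hM1
  have hM1nn : 0 ≤ M1 := mul_nonneg (specTheta_nonneg 1) (Real.exp_pos _).le
  have hmaj1 : IntegrableOn (fun t : ℝ => K * t ^ (σ - 1 - a)) (Set.Ioc 0 1) := by
    have h1 : IntegrableOn (fun t : ℝ => t ^ (σ - 1 - a)) (Set.Ioc 0 1) := by
      rw [← intervalIntegrable_iff_integrableOn_Ioc_of_le zero_le_one]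
      exact intervalIntegral.intervalIntegrable_rpow' (by linarith)
    exact h1.const_mul _
  have hmaj2 : IntegrableOn (fun t : ℝ => M1 * (t ^ (σ - 1) * Real.exp (-lam0 * t)))
      (Set.Ioi 1) :=
    (((rpow_exp_integrableOn hσ0 hlam0).mono_set
      (Set.Ioi_subset_Ioi zero_le_one))).const_mul _
  apply summable_of_sum_le (c := (Real.Gamma σ)⁻¹ *
    ((∫ t in Set.Ioc (0:ℝ) 1, K * t ^ (σ - 1 - a)) +
      ∫ t in Set.Ioi (1:ℝ), M1 * (t ^ (σ - 1) * Real.exp (-lam0 * t))))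
  · intro i
    exact Real.rpow_nonneg (hpos i).le _
  intro u
  have hint : ∀ i, IntegrableOn (fun t : ℝ => t ^ (σ - 1) * Real.exp (-(lam i) * t))
      (Set.Ioi 0) := fun i => rpow_exp_integrableOn hσ0 (hpos i)
  have hintu : IntegrableOn (fun t : ℝ => ∑ i ∈ u, t ^ (σ - 1) * Real.exp (-(lam i) * t))
      (Set.Ioi 0) := integrable_finset_sum u fun i _ => hint i
  have hintu1 : IntegrableOn (fun t : ℝ => ∑ i ∈ u, t ^ (σ - 1) * Real.exp (-(lam i) * t))
      (Set.Ioc 0 1) := hintu.mono_set Set.Ioc_subset_Ioi_self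
  have hintu2 : IntegrableOn (fun t : ℝ => ∑ i ∈ u, t ^ (σ - 1) * Real.exp (-(lam i) * t))
      (Set.Ioi 1) := hintu.mono_set (Set.Ioi_subset_Ioi zero_le_one)
  have hterm : ∀ i, lam i ^ (-σ) =
      (Real.Gamma σ)⁻¹ * ∫ t in Set.Ioi (0:ℝ), t ^ (σ - 1) * Real.exp (-(lam i) * t) := by
    intro i
    rw [rpow_exp_integral hσ0 (hpos i)]
    field_simp
  have hb1 : ∀ t ∈ Set.Ioc (0:ℝ) 1,
      (∑ i ∈ u, t ^ (σ - 1) * Real.exp (-(lam i) * t)) ≤ K * t ^ (σ - 1 - a) := by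
    intro t ht
    have hsum_le : ∑ i ∈ u, Real.exp (-(lam i) * t) ≤ specTheta lam t := by
      rw [specTheta_eq hθ ht.1]
      exact (hθ t ht.1).sum_le_tsum u (fun i _ => (Real.exp_pos _).le)
    have hθle := specTheta_small hθ hC0 h ht
    calc ∑ i ∈ u, t ^ (σ - 1) * Real.exp (-(lam i) * t)
        = t ^ (σ - 1) * ∑ i ∈ u, Real.exp (-(lam i) * t) := by rw [Finset.mul_sum]
      _ ≤ t ^ (σ - 1) * (K * t ^ (-a)) :=
          mul_le_mul_of_nonneg_left (hsum_le.trans hθle) (Real.rpow_nonneg ht.1.le _)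
      _ = K * t ^ (σ - 1 - a) := by
          rw [show σ - 1 - a = (σ - 1) + -a by ring, Real.rpow_add ht.1]; ring
  have hb2 : ∀ t ∈ Set.Ioi (1:ℝ),
      (∑ i ∈ u, t ^ (σ - 1) * Real.exp (-(lam i) * t)) ≤
        M1 * (t ^ (σ - 1) * Real.exp (-lam0 * t)) := by
    intro t ht
    have ht0 : (0:ℝ) < t := lt_trans one_pos ht
    have hsum_le : ∑ i ∈ u, Real.exp (-(lam i) * t) ≤ specTheta lam t := by
      rw [specTheta_eq hθ ht0]
      exact (hθ t ht0).sum_le_tsum u (fun i _ => (Real.exp_pos _).le)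
    have hθle := specTheta_decay hθ hlam0 hge (le_of_lt ht)
    calc ∑ i ∈ u, t ^ (σ - 1) * Real.exp (-(lam i) * t)
        = t ^ (σ - 1) * ∑ i ∈ u, Real.exp (-(lam i) * t) := by rw [Finset.mul_sum]
      _ ≤ t ^ (σ - 1) * (M1 * Real.exp (-lam0 * t)) :=
          mul_le_mul_of_nonneg_left (hsum_le.trans hθle) (Real.rpow_nonneg ht0.le _)
      _ = M1 * (t ^ (σ - 1) * Real.exp (-lam0 * t)) := by ring
  calc ∑ i ∈ u, lam i ^ (-σ)
      = (Real.Gamma σ)⁻¹ *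
        ∑ i ∈ u, ∫ t in Set.Ioi (0:ℝ), t ^ (σ - 1) * Real.exp (-(lam i) * t) := by
        rw [Finset.mul_sum]; exact Finset.sum_congr rfl fun i _ => hterm i
    _ = (Real.Gamma σ)⁻¹ *
        ∫ t in Set.Ioi (0:ℝ), ∑ i ∈ u, t ^ (σ - 1) * Real.exp (-(lam i) * t) := by
        rw [integral_finset_sum u fun i _ => hint i]
    _ = (Real.Gamma σ)⁻¹ *
        ((∫ t in Set.Ioc (0:ℝ) 1, ∑ i ∈ u, t ^ (σ - 1) * Real.exp (-(lam i) * t)) +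
          ∫ t in Set.Ioi (1:ℝ), ∑ i ∈ u, t ^ (σ - 1) * Real.exp (-(lam i) * t)) := by
        rw [← setIntegral_union (Set.Ioc_disjoint_Ioi le_rfl) measurableSet_Ioi hintu1 hintu2,
          Set.Ioc_union_Ioi_eq_Ioi zero_le_one]
    _ ≤ (Real.Gamma σ)⁻¹ *
        ((∫ t in Set.Ioc (0:ℝ) 1, K * t ^ (σ - 1 - a)) +
          ∫ t in Set.Ioi (1:ℝ), M1 * (t ^ (σ - 1) * Real.exp (-lam0 * t))) := by
        apply mul_le_mul_of_nonneg_left _ (inv_nonneg.mpr hgam.le)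
        exact add_le_add
          (setIntegral_mono_on hintu1 hmaj1 measurableSet_Ioc hb1)
          (setIntegral_mono_on hintu2 hmaj2 measurableSet_Ioi hb2)

lemma cexp_mellin_conv {r : ℝ} (hr : 0 < r) {s : ℂ} (hs : 0 < s.re) :
    IntegrableOn (fun t : ℝ => (t:ℂ) ^ (s - 1) * (Real.exp (-r * t) : ℂ)) (Set.Ioi 0) := by
  have h := mellinConvergent_of_isBigO_rpow_exp (a := r) (b := 0) hr
    (f := fun t : ℝ => ((Real.exp (-r * t) : ℝ) : ℂ)) ?_ ?_ ?_ hs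
  · simpa [MellinConvergent, smul_eq_mul] using h
  · exact ((Complex.continuous_ofReal.comp (Real.continuous_exp.comp
      (continuous_const.mul continuous_id))).locallyIntegrable).locallyIntegrableOn _
  · rw [isBigO_iff]
    refine ⟨1, Eventually.of_forall fun t => ?_⟩
    rw [one_mul, Complex.norm_real]
  · rw [isBigO_iff]
    refine ⟨1, ?_⟩
    filter_upwards [self_mem_nhdsWithin] with t (ht : 0 < t)
    rw [neg_zero, Real.rpow_zero]
    simp only [Complex.norm_real, Real.norm_eq_abs, abs_of_nonneg (Real.exp_pos _).le,
      norm_one, mul_one]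
    calc Real.exp (-r * t) ≤ Real.exp 0 := Real.exp_le_exp.mpr (by nlinarith)
      _ = 1 := Real.exp_zero

lemma cexp_mellin_integral {r : ℝ} (hr : 0 < r) {s : ℂ} (hs : 0 < s.re) :
    ∫ t in Set.Ioi (0:ℝ), (t:ℂ) ^ (s - 1) * (Real.exp (-r * t) : ℂ) =
      (r:ℂ) ^ (-s) * Complex.Gamma s := by
  have h := Complex.integral_cpow_mul_exp_neg_mul_Ioi hs hr
  have e1 : ∀ t : ℝ, ((Real.exp (-r * t) : ℝ) : ℂ) = Complex.exp (-(↑r * ↑t)) := by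
    intro t
    rw [Complex.ofReal_exp]
    push_cast
    ring_nf
  simp_rw [e1]
  rw [h, one_div, Complex.inv_cpow _ _ ?_, ← Complex.cpow_neg]
  rw [Complex.arg_ofReal_of_nonneg hr.le]
  exact Real.pi_ne_zero.symm

lemma mellin_theta (hθ : ∀ t : ℝ, 0 < t → Summable fun i => Real.exp (-(lam i) * t))
    (hlam0 : 0 < lam0) (hge : ∀ i, lam0 ≤ lam i) {s : ℂ} (hs0 : 0 < s.re)
    (hsum : Summable fun i => lam i ^ (-s.re)) :
    ∫ t in Set.Ioi (0:ℝ), (t:ℂ) ^ (s - 1) * (specTheta lam t : ℂ) =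
      Complex.Gamma s * ∑' i, (lam i : ℂ) ^ (-s) := by
  have hpos : ∀ i, 0 < lam i := fun i => lt_of_lt_of_le hlam0 (hge i)
  have hnorm : ∀ i, ∫ t in Set.Ioi (0:ℝ),
      ‖(t:ℂ) ^ (s - 1) * (Real.exp (-(lam i) * t) : ℂ)‖ =
      lam i ^ (-s.re) * Real.Gamma s.re := by
    intro i
    rw [← rpow_exp_integral hs0 (hpos i)]
    refine setIntegral_congr_fun measurableSet_Ioi (fun t ht => ?_)
    rw [norm_mul, Complex.norm_cpow_eq_rpow_re_of_pos ht,
      Complex.sub_re, Complex.one_re, Complex.norm_real, Real.norm_eq_abs,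
      abs_of_nonneg (Real.exp_pos _).le]
  have hswap := MeasureTheory.integral_tsum_of_summable_integral_norm
      (F := fun i => fun t : ℝ => (t:ℂ) ^ (s - 1) * (Real.exp (-(lam i) * t) : ℂ))
      (μ := volume.restrict (Set.Ioi 0)) (fun i => cexp_mellin_conv (hpos i) hs0) ?_
  · have hL : ∀ i, ∫ t in Set.Ioi (0:ℝ), (t:ℂ) ^ (s - 1) * (Real.exp (-(lam i) * t) : ℂ) =
        (lam i : ℂ) ^ (-s) * Complex.Gamma s := fun i => cexp_mellin_integral (hpos i) hs0
    rw [tsum_congr hL, tsum_mul_right] at hswap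
    rw [mul_comm (Complex.Gamma s), hswap]
    refine integral_congr_ae ((ae_restrict_iff' measurableSet_Ioi).mpr
      (Eventually.of_forall fun t ht => ?_))
    simp only []
    rw [specTheta_eq hθ ht, Complex.ofReal_tsum, tsum_mul_left]
  · apply Summable.congr (hsum.mul_right (Real.Gamma s.re))
    intro i
    exact (hnorm i).symm

noncomputable def specI (a : ℝ) (k : ℕ) : ℝ → ℂ :=
  Set.indicator (Set.Ioc 0 1) (fun t => (t:ℂ) ^ ((k:ℂ) - a))

noncomputable def specH (lam : ℕ → ℝ) (a : ℝ) (c : ℕ → ℝ) (j : ℕ) (s : ℂ) : ℂ :=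
  mellin (specF lam a c j) s +
    (∑ k ∈ Finset.range (j+1), (c k : ℂ) * (s - a + k)⁻¹) + mellin (specG lam) s

lemma specI_hasMellin {k : ℕ} {s : ℂ} (hs : 0 < s.re + ((k:ℝ) - a)) :
    HasMellin (specI a k) s (1 / (s + ((k:ℂ) - a))) := by
  apply hasMellin_cpow_Ioc
  simpa using hs

lemma specI_val {k : ℕ} {t : ℝ} (ht : t ∈ Set.Ioc (0:ℝ) 1) :
    specI a k t = ((t ^ (-a) * t ^ k : ℝ) : ℂ) := by
  rw [specI, Set.indicator_of_mem ht]
  have h1 : (t ^ (-a) * t ^ k : ℝ) = t ^ ((k:ℝ) - a) := by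
    rw [show (k:ℝ) - a = (k:ℝ) + -a by ring, Real.rpow_add ht.1, Real.rpow_natCast]
    ring
  rw [h1, Complex.ofReal_cpow ht.1.le]
  push_cast
  rfl

lemma theta_decomp (j : ℕ) {t : ℝ} (ht : 0 < t) :
    (specTheta lam t : ℂ) = specF lam a c j t +
      (∑ k ∈ Finset.range (j+1), (c k : ℂ) * specI a k t) + specG lam t := by
  by_cases h1 : t ≤ 1
  · have hmem : t ∈ Set.Ioc (0:ℝ) 1 := ⟨ht, h1⟩
    have hnot : t ∉ Set.Ioi (1:ℝ) := by simpa using h1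
    rw [specF, specG, Set.indicator_of_mem hmem, Set.indicator_of_notMem hnot]
    have hmid : ∀ k ∈ Finset.range (j+1),
        (c k : ℂ) * specI a k t = ((c k * (t ^ (-a) * t ^ k) : ℝ) : ℂ) := by
      intro k _
      rw [specI_val hmem]
      push_cast
      ring
    have hsum : (∑ k ∈ Finset.range (j+1), (c k : ℂ) * specI a k t)
        = ((t ^ (-a) * ∑ k ∈ Finset.range (j+1), c k * t ^ k : ℝ) : ℂ) := by
      rw [Finset.sum_congr rfl hmid, ← Complex.ofReal_sum]
      congr 1
      rw [Finset.mul_sum]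
      exact Finset.sum_congr rfl fun x _ => by ring
    rw [hsum]
    push_cast
    ring
  · have hnot : t ∉ Set.Ioc (0:ℝ) 1 := fun hm => h1 hm.2
    have hmem : t ∈ Set.Ioi (1:ℝ) := by simpa using lt_of_not_ge h1
    rw [specF, specG, Set.indicator_of_notMem hnot, Set.indicator_of_mem hmem]
    have hmid : ∀ k ∈ Finset.range (j+1), (c k : ℂ) * specI a k t = 0 := by
      intro k _
      rw [specI, Set.indicator_of_notMem hnot, mul_zero]
    rw [Finset.sum_congr rfl hmid]
    simp

lemma mellin_add_mul {f g : ℝ → ℂ} {s : ℂ} (hf : MellinConvergent f s)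
    (hg : MellinConvergent g s) (z : ℂ) :
    mellin (fun t => f t + z * g t) s = mellin f s + z * mellin g s := by
  have hf' : IntegrableOn (fun t : ℝ => (t:ℂ) ^ (s-1) * f t) (Set.Ioi 0) := by
    simpa [MellinConvergent, smul_eq_mul] using hf
  have hg' : IntegrableOn (fun t : ℝ => (t:ℂ) ^ (s-1) * g t) (Set.Ioi 0) := by
    simpa [MellinConvergent, smul_eq_mul] using hg
  calc mellin (fun t => f t + z * g t) s
      = ∫ t in Set.Ioi (0:ℝ), ((t:ℂ) ^ (s-1) * f t + z * ((t:ℂ) ^ (s-1) * g t)) := by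
        simp only [mellin, smul_eq_mul]
        exact integral_congr_ae (Eventually.of_forall fun t => by ring)
    _ = (∫ t in Set.Ioi (0:ℝ), (t:ℂ) ^ (s-1) * f t) +
          z * ∫ t in Set.Ioi (0:ℝ), (t:ℂ) ^ (s-1) * g t := by
        rw [integral_add hf' (hg'.const_mul z), integral_const_mul]
    _ = mellin f s + z * mellin g s := by simp [mellin, smul_eq_mul]

lemma mellin_theta_split (hθ : ∀ t : ℝ, 0 < t → Summable fun i => Real.exp (-(lam i) * t))
    (hlam0 : 0 < lam0) (hge : ∀ i, lam0 ≤ lam i) (ha : 0 < a)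
    {j : ℕ} {Cj : ℝ} (hCj : 0 ≤ Cj)
    (h : ∀ t ∈ Set.Ioc (0:ℝ) 1,
      |(∑' i, Real.exp (-(lam i) * t)) - t ^ (-a) * ∑ k ∈ Finset.range (j+1), c k * t ^ k| ≤
        Cj * t ^ ((j:ℝ) + 1 - a)) {s : ℂ} (hs : a < s.re) :
    ∫ t in Set.Ioi (0:ℝ), (t:ℂ) ^ (s - 1) * (specTheta lam t : ℂ) = specH lam a c j s := by
  have hFc : MellinConvergent (specF lam a c j) s :=
    specF_mellin_conv hθ hCj h (by push_cast; linarith [Nat.cast_nonneg (α := ℝ) j])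
  have hGc := specG_mellin_conv hθ hlam0 hge s
  have hIk : ∀ k : ℕ, HasMellin (specI a k) s (1 / (s + ((k:ℂ) - a))) := fun k =>
    specI_hasMellin (by have := Nat.cast_nonneg (α := ℝ) k; linarith)
  have hi1 : IntegrableOn (fun t : ℝ => (t:ℂ) ^ (s-1) • specF lam a c j t) (Set.Ioi 0) := hFc
  have hi3 : IntegrableOn (fun t : ℝ => (t:ℂ) ^ (s-1) • specG lam t) (Set.Ioi 0) := hGc
  have hi2k : ∀ k, IntegrableOn
      (fun t : ℝ => (c k : ℂ) * ((t:ℂ) ^ (s-1) • specI a k t)) (Set.Ioi 0) := fun k =>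
    ((hIk k).1).const_mul _
  have hi2 : IntegrableOn (fun t : ℝ =>
      ∑ k ∈ Finset.range (j+1), (c k : ℂ) * ((t:ℂ) ^ (s-1) • specI a k t)) (Set.Ioi 0) :=
    integrable_finset_sum _ fun k _ => hi2k k
  have hdecomp : ∀ t ∈ Set.Ioi (0:ℝ), (t:ℂ) ^ (s - 1) * (specTheta lam t : ℂ) =
      ((t:ℂ) ^ (s-1) • specF lam a c j t +
        ∑ k ∈ Finset.range (j+1), (c k : ℂ) * ((t:ℂ) ^ (s-1) • specI a k t)) +
      (t:ℂ) ^ (s-1) • specG lam t := by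
    intro t ht
    rw [theta_decomp j ht]
    simp only [smul_eq_mul]
    rw [mul_add, mul_add, Finset.mul_sum]
    congr 1
    congr 1
    exact Finset.sum_congr rfl fun k _ => by ring
  have hi12 : IntegrableOn (fun t : ℝ => (t:ℂ) ^ (s-1) • specF lam a c j t +
      ∑ k ∈ Finset.range (j+1), (c k : ℂ) * ((t:ℂ) ^ (s-1) • specI a k t)) (Set.Ioi 0) :=
    hi1.add hi2
  rw [setIntegral_congr_fun measurableSet_Ioi hdecomp,
    integral_add hi12 hi3, integral_add hi1 hi2,
    integral_finset_sum _ fun k _ => hi2k k]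
  have hmid : ∀ k ∈ Finset.range (j+1),
      (∫ t in Set.Ioi (0:ℝ), (c k : ℂ) * ((t:ℂ) ^ (s-1) • specI a k t)) =
        (c k : ℂ) * (s - a + k)⁻¹ := by
    intro k _
    rw [integral_const_mul]
    have : (∫ t in Set.Ioi (0:ℝ), (t:ℂ) ^ (s-1) • specI a k t) = mellin (specI a k) s := rfl
    rw [this, (hIk k).2, one_div]
    congr 2
    ring
  rw [Finset.sum_congr rfl hmid]
  rfl

lemma specH_succ (hθ : ∀ t : ℝ, 0 < t → Summable fun i => Real.exp (-(lam i) * t))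
    {j : ℕ} {Cj' : ℝ} (hCj' : 0 ≤ Cj')
    (h' : ∀ t ∈ Set.Ioc (0:ℝ) 1,
      |(∑' i, Real.exp (-(lam i) * t)) - t ^ (-a) * ∑ k ∈ Finset.range (j+2), c k * t ^ k| ≤
        Cj' * t ^ (((j:ℝ)+1) + 1 - a)) {s : ℂ} (hs : a - ((j:ℝ) + 1) < s.re) :
    specH lam a c j s = specH lam a c (j+1) s := by
  have hfd : specF lam a c j = fun t =>
      specF lam a c (j+1) t + (c (j+1) : ℂ) * specI a (j+1) t := by
    funext t
    by_cases hmem : t ∈ Set.Ioc (0:ℝ) 1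
    · rw [specF, specF, Set.indicator_of_mem hmem, Set.indicator_of_mem hmem,
        specI_val hmem, Finset.sum_range_succ (n := j+1)]
      push_cast
      ring
    · rw [specF, specF, Set.indicator_of_notMem hmem, Set.indicator_of_notMem hmem,
        specI, Set.indicator_of_notMem hmem]
      simp
  have hc1 : MellinConvergent (specF lam a c (j+1)) s := by
    refine specF_mellin_conv hθ hCj' ?_ ?_
    · intro t ht
      have := h' t ht
      convert this using 3 <;> push_cast <;> ring
    · push_cast; linarith
  have hI : HasMellin (specI a (j+1)) s (1 / (s + (((j+1:ℕ):ℂ) - a))) :=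
    specI_hasMellin (by push_cast; linarith)
  have hmel : mellin (specF lam a c j) s = mellin (specF lam a c (j+1)) s +
      (c (j+1) : ℂ) * (1 / (s + (((j+1:ℕ):ℂ) - a))) := by
    rw [hfd, mellin_add_mul hc1 hI.1, hI.2]
  rw [specH, specH, hmel, Finset.sum_range_succ (n := j+1)]
  push_cast
  ring

set_option maxHeartbeats 1000000 in
lemma meromorphicAt_finsum {S : Finset ℕ} {g : ℕ → ℂ → ℂ} {x : ℂ}
    (h : ∀ k ∈ S, MeromorphicAt (g k) x) :
    MeromorphicAt (fun s => ∑ k ∈ S, g k s) x := by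
  classical
  induction S using Finset.induction with
  | empty => simpa using MeromorphicAt.const (0:ℂ) x
  | @insert b T hb ih =>
      have h1 : MeromorphicAt (fun s => g b s + ∑ k ∈ T, g k s) x :=
        (h b (Finset.mem_insert_self b T)).add
          (ih fun k hk => h k (Finset.mem_insert_of_mem hk))
      simpa [Finset.sum_insert hb] using h1

set_option maxHeartbeats 2000000 in
/-- **Corollary 1.2: meromorphic continuation of the spectral zeta function.**
If the eigenvalues `λ i` are bounded below by `λ₀ > 0`, the heat trace
`θ(t) = ∑ exp(-λ i * t)` converges for all `t > 0` and admits a full short time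
asymptotic expansion `θ(t) ~ t^(-ν/2) (c₀ + c₁ t + c₂ t² + ⋯)`, then the spectral
zeta function `∑ (λ i)^(-s)` converges absolutely for `Re s > ν/2` and extends
to a meromorphic function on all of `ℂ`. -/
theorem spectral_zeta_meromorphic_continuation
    (ν : ℝ) (hν : 0 < ν) (lam : ℕ → ℝ) (lam0 : ℝ) (hlam0 : 0 < lam0)
    (hge : ∀ i, lam0 ≤ lam i)
    (hθ : ∀ t : ℝ, 0 < t → Summable fun i => Real.exp (-(lam i) * t))
    (c : ℕ → ℝ)
    (hexp : ∀ j : ℕ, ∃ Cj : ℝ, 0 < Cj ∧ ∀ t ∈ Set.Ioc (0 : ℝ) 1,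
      |(∑' i, Real.exp (-(lam i) * t)) -
          t ^ (-(ν / 2)) * ∑ k ∈ Finset.range (j + 1), c k * t ^ k| ≤
        Cj * t ^ ((j : ℝ) + 1 - ν / 2)) :
    (∀ s : ℂ, ν / 2 < s.re → Summable fun i => ‖(lam i : ℂ) ^ (-s)‖) ∧
    ∃ F : ℂ → ℂ, MeromorphicOn F Set.univ ∧
      ∀ s : ℂ, ν / 2 < s.re → F s = ∑' i, (lam i : ℂ) ^ (-s) := by
  set a : ℝ := ν / 2 with ha_def
  have ha : 0 < a := by positivity
  have hpos : ∀ i, 0 < lam i := fun i => lt_of_lt_of_le hlam0 (hge i)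
  choose CC hCCpos hCC using hexp
  have hCC' : ∀ j : ℕ, ∀ t ∈ Set.Ioc (0:ℝ) 1,
      |(∑' i, Real.exp (-(lam i) * t)) -
        t ^ (-a) * ∑ k ∈ Finset.range (j + 1), c k * t ^ k| ≤ CC j * t ^ ((j:ℝ) + 1 - a) := by
    intro j t ht
    have h2 := hCC j t ht
    simpa [ha_def] using h2
  have hsum : ∀ σ : ℝ, a < σ → Summable fun i => lam i ^ (-σ) := fun σ hσ =>
    spec_summable hθ hlam0 hge ha (hCCpos 0).le (hCC' 0) hσ
  constructor
  · intro s hs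
    refine (hsum s.re hs).congr fun i => ?_
    rw [Complex.norm_cpow_eq_rpow_re_of_pos (hpos i), Complex.neg_re]
  -- the meromorphic continuation
  have hJ : ∀ s : ℂ, a - (⌈a - s.re⌉₊ : ℝ) - 1 < s.re := by
    intro s
    have := Nat.le_ceil (a - s.re)
    linarith
  have hHeq : ∀ (s : ℂ) (j j' : ℕ), j ≤ j' → a - ((j:ℝ) + 1) < s.re →
      specH lam a c j s = specH lam a c j' s := by
    intro s j j' hle hs
    induction j', hle using Nat.le_induction with
    | base => rfl
    | succ n hn ih =>
        refine ih.trans (specH_succ hθ (hCCpos (n+1)).le ?_ ?_)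
        · intro t ht
          rw [show ((n:ℝ) + 1) + 1 - a = (((n+1):ℕ):ℝ) + 1 - a by push_cast; ring]
          exact hCC' (n+1) t ht
        · have : (j:ℝ) ≤ (n:ℝ) := by exact_mod_cast hn
          linarith
  refine ⟨fun s => (Complex.Gamma s)⁻¹ * specH lam a c (⌈a - s.re⌉₊) s, ?_, ?_⟩
  · -- meromorphy
    intro x _
    set m : ℕ := ⌈a - x.re⌉₊ + 1 with hm
    have hxm : a - (m:ℝ) < x.re := by
      have := hJ x
      push_cast [hm]
      linarith
    have hU : IsOpen {s : ℂ | x.re - 1 < s.re} := isOpen_lt continuous_const Complex.continuous_re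
    have hxU : x ∈ {s : ℂ | x.re - 1 < s.re} := by simp
    have hFG : ∀ s ∈ {s : ℂ | x.re - 1 < s.re},
        (Complex.Gamma s)⁻¹ * specH lam a c (⌈a - s.re⌉₊) s =
          (Complex.Gamma s)⁻¹ * specH lam a c m s := by
      intro s hs
      have hs' : x.re - 1 < s.re := hs
      have h1 : a - ((⌈a - s.re⌉₊ : ℝ) + 1) < s.re := by have := hJ s; linarith
      have h2 : a - ((m:ℝ) + 1) < s.re := by linarith
      rcases le_total (⌈a - s.re⌉₊) m with hle | hle
      · rw [hHeq s _ m hle h1]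
      · rw [← hHeq s m _ hle h2]
    have hV : IsOpen {s : ℂ | a - ((m:ℝ) + 1) < s.re} :=
      isOpen_lt continuous_const Complex.continuous_re
    have hxV : x ∈ {s : ℂ | a - ((m:ℝ) + 1) < s.re} := by
      show a - ((m:ℝ) + 1) < x.re
      linarith
    have hmF : AnalyticAt ℂ (mellin (specF lam a c m)) x :=
      DifferentiableOn.analyticAt
        (fun s hs => (specF_mellin_diff hθ (hCCpos m).le (hCC' m) hs).differentiableWithinAt)
        (hV.mem_nhds hxV)
    have hmG : AnalyticAt ℂ (mellin (specG lam)) x :=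
      (Differentiable.analyticAt (fun s => specG_mellin_diff hθ hlam0 hge s) x)
    have hmid : MeromorphicAt
        (fun s => ∑ k ∈ Finset.range (m+1), (c k : ℂ) * (s - (a:ℂ) + (k:ℂ))⁻¹) x := by
      refine meromorphicAt_finsum fun k _ => ?_
      have hbase : MeromorphicAt (fun s : ℂ => s - (a:ℂ) + (k:ℂ)) x :=
        ((MeromorphicAt.id x).sub (MeromorphicAt.const _ x)).add (MeromorphicAt.const _ x)
      have hden : MeromorphicAt (fun s : ℂ => (s - (a:ℂ) + (k:ℂ))⁻¹) x := hbase.inv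
      exact (MeromorphicAt.const _ x).mul hden
    have hGinv : AnalyticAt ℂ (fun s : ℂ => (Complex.Gamma s)⁻¹) x :=
      Complex.differentiable_one_div_Gamma.analyticAt x
    have hGm : MeromorphicAt (fun s : ℂ => (Complex.Gamma s)⁻¹ * specH lam a c m s) x := by
      have hH : MeromorphicAt (fun s : ℂ => specH lam a c m s) x :=
        (hmF.meromorphicAt.add hmid).add hmG.meromorphicAt
      exact hGinv.meromorphicAt.mul hH
    refine hGm.congr ?_
    exact Filter.eventually_of_mem
      (mem_nhdsWithin_of_mem_nhds (hU.mem_nhds hxU)) (fun s hs => (hFG s hs).symm)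
  · -- equality on the halfplane
    intro s hs
    have hs0 : 0 < s.re := lt_trans ha hs
    have hGz : Complex.Gamma s ≠ 0 := Complex.Gamma_ne_zero_of_re_pos hs0
    have hH0 : specH lam a c (⌈a - s.re⌉₊) s = specH lam a c 0 s :=
      (hHeq s 0 _ (Nat.zero_le _) (by push_cast; linarith)).symm
    have hval : specH lam a c 0 s = Complex.Gamma s * ∑' i, (lam i : ℂ) ^ (-s) :=
      (mellin_theta_split hθ hlam0 hge ha (hCCpos 0).le (hCC' 0) hs).symm.trans
        (mellin_theta hθ hlam0 hge hs0 (hsum s.re hs))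
    show (Complex.Gamma s)⁻¹ * specH lam a c (⌈a - s.re⌉₊) s = _
    rw [hH0, hval, inv_mul_cancel_left₀ hGz]
end

section
/- Let B be an n×n complex matrix and let t ≥ 0. Assume cosh(sB) is invertible for every s ∈ [0, t]. Then ∫_0^t (cosh(sB))⁻² ds = t · shc(tB) · (cosh(tB))⁻¹, an identity of n×n complex matrices, where the left-hand side is the Bochner integral of the matrix-valued function s ↦ (cosh(sB)⁻¹)². -/
noncomputable section

open NormedSpace MeasureTheory

attribute [local instance] Matrix.linftyOpNormedRing Matrix.linftyOpNormedAlgebra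

/-- The hyperbolic cosine of a square complex matrix:
`cosh X = (exp X + exp (-X)) / 2`. -/
def mcosh {n : ℕ} (X : Matrix (Fin n) (Fin n) ℂ) : Matrix (Fin n) (Fin n) ℂ :=
  (2 : ℂ)⁻¹ • (exp X + exp (-X))

/-- `shc X = ∑_{k≥0} X^(2k) / (2k+1)!`, the entire function equal to
`sinh(X) X⁻¹` for invertible `X`. -/
def mshc {n : ℕ} (X : Matrix (Fin n) (Fin n) ℂ) : Matrix (Fin n) (Fin n) ℂ :=
  ∑' k : ℕ, (((2 * k + 1).factorial : ℂ))⁻¹ • X ^ (2 * k)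

instance instPMSMatrix {n : ℕ} : TopologicalSpace.PseudoMetrizableSpace (Matrix (Fin n) (Fin n) ℂ) :=
  inferInstanceAs (TopologicalSpace.PseudoMetrizableSpace (Fin n → Fin n → ℂ))

namespace IntegralMcoshAux

variable {n : ℕ}

local notation "M" => Matrix (Fin n) (Fin n) ℂ

lemma coe_smul (B : M) (s : ℝ) : (s : ℂ) • B = s • B := by
  rw [← Complex.coe_algebraMap, algebraMap_smul]

/-- `sinh (s • B)` -/
def Sc (B : M) (s : ℝ) : M :=
  (2 : ℂ)⁻¹ • (exp (s • B) - exp (s • (-B)))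

lemma mcosh_eq (B : M) (s : ℝ) :
    mcosh ((s : ℂ) • B) = (2 : ℂ)⁻¹ • (exp (s • B) + exp (s • (-B))) := by
  rw [mcosh, coe_smul, smul_neg]

lemma hE (B : M) (s : ℝ) :
    HasDerivAt (fun u : ℝ => exp (u • B)) (B * exp (s • B)) s := by
  exact hasDerivAt_exp_smul_const' (𝕂 := ℝ) B s

lemma hE' (B : M) (s : ℝ) :
    HasDerivAt (fun u : ℝ => exp (u • B)) (exp (s • B) * B) s := by
  exact hasDerivAt_exp_smul_const (𝕂 := ℝ) B s

lemma hC (B : M) (s : ℝ) :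
    HasDerivAt (fun u : ℝ => mcosh ((u : ℂ) • B)) (B * Sc B s) s := by
  have h := ((hE B s).add (hE (-B) s)).const_smul ((2:ℂ)⁻¹)
  have heq : (fun u : ℝ => (2:ℂ)⁻¹ • (exp (u • B) + exp (u • (-B))))
      = fun u : ℝ => mcosh ((u : ℂ) • B) := by
    funext u; rw [mcosh_eq]
  simp only [Pi.smul_def, Pi.add_def] at h
  rw [heq] at h
  refine h.congr_deriv ?_
  rw [Sc]
  simp only [mul_smul_comm, mul_sub, mul_add, neg_mul, mul_neg, sub_eq_add_neg]

lemma hS (B : M) (s : ℝ) :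
    HasDerivAt (fun u : ℝ => Sc B u) (mcosh ((s : ℂ) • B) * B) s := by
  have h := ((hE' B s).sub (hE' (-B) s)).const_smul ((2:ℂ)⁻¹)
  refine h.congr_deriv ?_
  rw [mcosh_eq]
  simp only [smul_mul_assoc, add_mul, sub_mul, mul_neg, neg_mul, sub_eq_add_neg, neg_neg]

lemma cont_exp (B : M) : Continuous (fun u : ℝ => exp (u • B)) :=
  exp_continuous.comp (continuous_id.smul continuous_const)

lemma cont_C (B : M) : Continuous (fun u : ℝ => mcosh ((u : ℂ) • B)) := by
  have : Continuous fun u : ℝ => (2:ℂ)⁻¹ • (exp (u • B) + exp (u • (-B))) :=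
    (((cont_exp B).add (cont_exp (-B)))).const_smul ((2:ℂ)⁻¹)
  simpa only [mcosh_eq] using this

lemma cont_S (B : M) : Continuous (Sc B) :=
  (((cont_exp B).sub (cont_exp (-B)))).const_smul ((2:ℂ)⁻¹)

lemma commB_C (B : M) (s : ℝ) : Commute B (mcosh ((s : ℂ) • B)) := by
  rw [mcosh_eq]
  exact ((((Commute.refl B).smul_right s).exp_right).add_right
    ((((Commute.refl B).neg_right).smul_right s).exp_right)).smul_right _

lemma comm_CC (B : M) (u s : ℝ) :
    Commute (mcosh ((u : ℂ) • B)) (mcosh ((s : ℂ) • B)) := by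
  rw [mcosh_eq, mcosh_eq]
  have h : ∀ x y : M, Commute x B → Commute x (-B) →
      Commute x ((2:ℂ)⁻¹ • (exp (s • B) + exp (s • (-B)))) := by
    intro x y h1 h2
    exact (((h1.smul_right s).exp_right).add_right
      (((h2.smul_right s).exp_right))).smul_right _
  have h1 : Commute (exp (u • B)) ((2:ℂ)⁻¹ • (exp (s • B) + exp (s • (-B)))) := by
    refine h _ B ?_ ?_
    · exact (((Commute.refl B).smul_left u).exp_left)
    · exact ((((Commute.refl B).neg_right).smul_left u).exp_left)
  have h2 : Commute (exp (u • (-B))) ((2:ℂ)⁻¹ • (exp (s • B) + exp (s • (-B)))) := by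
    refine h _ B ?_ ?_
    · exact ((((Commute.refl B).neg_left).smul_left u).exp_left)
    · exact ((((Commute.refl (-B))).smul_left u).exp_left)
  exact ((h1.add_left h2).smul_left _)

lemma comm_SC (B : M) (s : ℝ) : Commute (Sc B s) (mcosh ((s : ℂ) • B)) := by
  rw [Sc, mcosh_eq]
  have h : ∀ x : M, Commute x B → Commute x (-B) →
      Commute x ((2:ℂ)⁻¹ • (exp (s • B) + exp (s • (-B)))) := by
    intro x h1 h2
    exact (((h1.smul_right s).exp_right).add_right
      (((h2.smul_right s).exp_right))).smul_right _
  have h1 := h (exp (s • B)) (((Commute.refl B).smul_left s).exp_left)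
    ((((Commute.refl B).neg_right).smul_left s).exp_left)
  have h2 := h (exp (s • (-B))) ((((Commute.refl B).neg_left).smul_left s).exp_left)
    ((((Commute.refl (-B))).smul_left s).exp_left)
  exact (h1.sub_left h2).smul_left _

lemma cosh_sq_sub_sinh_sq (B : M) (s : ℝ) :
    mcosh ((s : ℂ) • B) * mcosh ((s : ℂ) • B) - Sc B s * Sc B s = 1 := by
  set e := exp (s • B) with he
  set f := exp (s • (-B)) with hf
  have hcomm : Commute (s • B) (s • (-B)) :=
    (((Commute.refl B).neg_right).smul_left s).smul_right s
  have hef : e * f = 1 := by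
    rw [he, hf, ← show exp (s • B + s • (-B)) = exp (s • B) * exp (s • (-B)) from exp_add_of_commute hcomm]
    simp
  have hfe : f * e = 1 := by
    rw [he, hf, ← show exp (s • (-B) + s • B) = exp (s • (-B)) * exp (s • B) from exp_add_of_commute hcomm.symm]
    simp
  rw [mcosh_eq, Sc, ← he, ← hf]
  rw [smul_mul_smul_comm, smul_mul_smul_comm]
  rw [← smul_sub]
  have : (e + f) * (e + f) - (e - f) * (e - f) = (2 : ℂ) • (e * f) + (2 : ℂ) • (f * e) := by
    simp only [mul_add, add_mul, mul_sub, sub_mul, two_smul]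
    abel
  rw [this, hef, hfe]
  module


/-- The primitive `G s = ∫_0^s cosh(uB) du`. -/
def G (B : M) (s : ℝ) : M := ∫ u in (0:ℝ)..s, mcosh ((u:ℂ) • B)

lemma hG (B : M) (s : ℝ) : HasDerivAt (G B) (mcosh ((s:ℂ) • B)) s :=
  intervalIntegral.integral_hasDerivAt_right ((cont_C B).intervalIntegrable _ _)
    ((cont_C B).stronglyMeasurableAtFilter _ _) (cont_C B).continuousAt

lemma GB_eq (B : M) (s : ℝ) : G B s * B = Sc B s := by
  have ftc : (∫ u in (0:ℝ)..s, mcosh ((u:ℂ)•B) * B) = Sc B s - Sc B 0 :=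
    intervalIntegral.integral_eq_sub_of_hasDerivAt (fun u _ => hS B u)
      (((cont_C B).mul continuous_const).intervalIntegrable _ _)
  have hS0 : Sc B 0 = 0 := by simp [Sc]
  have hcomm := ((ContinuousLinearMap.mul ℂ _).flip B).intervalIntegral_comp_comm
      ((cont_C B).intervalIntegrable (μ := volume) (0:ℝ) s)
  simp only [ContinuousLinearMap.flip_apply, ContinuousLinearMap.mul_apply'] at hcomm
  rw [G, ← hcomm, ftc, hS0, sub_zero]

lemma comm_GC (B : M) (s : ℝ) : Commute (G B s) (mcosh ((s:ℂ)•B)) := by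
  have h1 := ((ContinuousLinearMap.mul ℂ _).flip (mcosh ((s:ℂ)•B))).intervalIntegral_comp_comm
    ((cont_C B).intervalIntegrable (μ := volume) (0:ℝ) s)
  have h2 := (ContinuousLinearMap.mul ℂ _ (mcosh ((s:ℂ)•B))).intervalIntegral_comp_comm
    ((cont_C B).intervalIntegrable (μ := volume) (0:ℝ) s)
  simp only [ContinuousLinearMap.flip_apply, ContinuousLinearMap.mul_apply'] at h1 h2
  show G B s * _ = _ * G B s
  rw [G, ← h1, ← h2]
  refine intervalIntegral.integral_congr fun u _ => ?_
  exact comm_CC B u s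

lemma hR (B : M) {s : ℝ} (hu : IsUnit (mcosh ((s:ℂ)•B))) :
    HasDerivAt (fun u : ℝ => Ring.inverse (mcosh ((u:ℂ)•B)))
      (-(Ring.inverse (mcosh ((s:ℂ)•B)) * (B * Sc B s) * Ring.inverse (mcosh ((s:ℂ)•B)))) s := by
  obtain ⟨u, hu'⟩ := hu
  have h2 : HasFDerivAt Ring.inverse
      (-ContinuousLinearMap.mulLeftRight ℂ _ ((↑u⁻¹ : M)) (↑u⁻¹)) (mcosh ((s:ℂ)•B)) :=
    hu' ▸ hasFDerivAt_ringInverse (𝕜 := ℂ) u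
  have hd := (h2.restrictScalars ℝ).comp_hasDerivAt s (hC B s)
  have hinv : (↑u⁻¹ : M) = Ring.inverse (mcosh ((s:ℂ)•B)) := by
    rw [← hu', Ring.inverse_unit]
  refine hd.congr_deriv ?_
  simp [ContinuousLinearMap.mulLeftRight_apply, hinv, mul_assoc]

lemma comm_GR (B : M) {s : ℝ} (hu : IsUnit (mcosh ((s:ℂ)•B))) :
    Commute (G B s) (Ring.inverse (mcosh ((s:ℂ)•B))) := by
  obtain ⟨u, hu'⟩ := hu
  rw [← hu', Ring.inverse_unit]
  exact (hu' ▸ comm_GC B s : Commute (G B s) (↑u : M)).units_inv_right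

lemma comm_SR (B : M) {s : ℝ} (hu : IsUnit (mcosh ((s:ℂ)•B))) :
    Commute (Sc B s) (Ring.inverse (mcosh ((s:ℂ)•B))) := by
  obtain ⟨u, hu'⟩ := hu
  rw [← hu', Ring.inverse_unit]
  exact (hu' ▸ comm_SC B s : Commute (Sc B s) (↑u : M)).units_inv_right

lemma hF (B : M) {s : ℝ} (hu : IsUnit (mcosh ((s:ℂ)•B))) :
    HasDerivAt (fun u : ℝ => G B u * Ring.inverse (mcosh ((u:ℂ)•B)))
      (Ring.inverse (mcosh ((s:ℂ)•B)) * Ring.inverse (mcosh ((s:ℂ)•B))) s := by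
  have h := (hG B s).mul (hR B hu)
  refine h.congr_deriv (Eq.symm ?_)
  set C := mcosh ((s:ℂ)•B) with hCdef
  set R := Ring.inverse C with hRdef
  set S := Sc B s with hSdef
  have hCR : C * R = 1 := Ring.mul_inverse_cancel C hu
  have hGR : G B s * R = R * G B s := comm_GR B hu
  have hSR : S * R = R * S := comm_SR B hu
  have hGB : G B s * B = S := GB_eq B s
  have hid : C * C - S * S = 1 := cosh_sq_sub_sinh_sq B s
  have hSS : S * S = C * C - 1 := by rw [← hid]; noncomm_ring
  symm
  calc C * R + G B s * -(R * (B * S) * R)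
      = C * R - (G B s * R) * ((B * S) * R) := by noncomm_ring
    _ = C * R - (R * G B s) * ((B * S) * R) := by rw [hGR]
    _ = C * R - R * ((G B s * B) * (S * R)) := by noncomm_ring
    _ = C * R - R * (S * (S * R)) := by rw [hGB]
    _ = C * R - (R * S) * (S * R) := by noncomm_ring
    _ = C * R - (S * R) * (S * R) := by rw [← hSR]
    _ = C * R - S * ((R * S) * R) := by noncomm_ring
    _ = C * R - S * ((S * R) * R) := by rw [← hSR]
    _ = C * R - (S * S) * (R * R) := by noncomm_ring
    _ = C * R - (C * C - 1) * (R * R) := by rw [hSS]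
    _ = C * R - C * ((C * R) * R) + R * R := by noncomm_ring
    _ = 1 - C * ((1:M) * R) + R * R := by rw [hCR]
    _ = R * R := by rw [one_mul, hCR]; noncomm_ring


lemma even_inj : Function.Injective (fun k : ℕ => 2 * k) := fun a b h => by
  have h' : 2 * a = 2 * b := h
  omega

lemma cosh_tsum (X : M) :
    mcosh X = ∑' k : ℕ, (((2 * k).factorial : ℂ))⁻¹ • X ^ (2 * k) := by
  have hs1 : Summable fun m : ℕ => ((m.factorial : ℂ))⁻¹ • X ^ m := expSeries_summable' X
  have hs2 : Summable fun m : ℕ => ((m.factorial : ℂ))⁻¹ • (-X) ^ m := expSeries_summable' (-X)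
  have hexp : exp X + exp (-X)
      = ∑' m : ℕ, (((m.factorial : ℂ))⁻¹ • X ^ m + ((m.factorial : ℂ))⁻¹ • (-X) ^ m) := by
    simp only [exp_eq_tsum (𝕂 := ℂ)]
    exact (Summable.tsum_add hs1 hs2).symm
  set f : ℕ → M := fun m => ((m.factorial:ℂ))⁻¹ • X ^ m + ((m.factorial:ℂ))⁻¹ • (-X) ^ m
    with hfdef
  have hf : Summable f := hs1.add hs2
  have heven : Summable fun k => f (2 * k) := hf.comp_injective even_inj
  have hodd : Summable fun k => f (2 * k + 1) := hf.comp_injective (fun a b h => by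
    have h' : 2 * a + 1 = 2 * b + 1 := h
    omega)
  have hsplit : ∑' k, f (2*k) + ∑' k, f (2*k+1) = ∑' m, f m := tsum_even_add_odd heven hodd
  have hzero : ∀ k, f (2*k+1) = 0 := by
    intro k
    have hodd' : (-X) ^ (2*k+1) = -(X ^ (2*k+1)) := Odd.neg_pow ⟨k, by ring⟩ X
    simp [hfdef, hodd']
  have heq : ∀ k, f (2*k) = (2:ℂ) • ((((2*k).factorial : ℂ))⁻¹ • X ^ (2*k)) := by
    intro k
    have he : (-X) ^ (2*k) = X ^ (2*k) := Even.neg_pow ⟨k, by ring⟩ X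
    rw [hfdef]
    simp only [he]
    rw [two_smul]
  rw [mcosh, hexp, ← hsplit]
  simp only [hzero, tsum_zero, add_zero]
  rw [← Summable.tsum_const_smul ((2:ℂ)⁻¹) heven]
  refine tsum_congr fun k => ?_
  rw [heq k, smul_smul]
  norm_num

lemma summable_even_norm (Y : M) :
    Summable fun k : ℕ => ‖(((2*k).factorial : ℂ))⁻¹ • Y ^ (2*k)‖ :=
  (norm_expSeries_summable' Y).comp_injective even_inj

lemma G_eq (B : M) {t : ℝ} (ht : 0 ≤ t) :
    G B t = (t:ℂ) • mshc ((t:ℂ) • B) := by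
  set g : ℕ → ℝ → M := fun k u => ((((2*k).factorial : ℂ))⁻¹ * (u:ℂ)^(2*k)) • B ^ (2*k)
    with hgdef
  have hcosh : ∀ u : ℝ, mcosh ((u:ℂ) • B) = ∑' k, g k u := by
    intro u
    rw [cosh_tsum]
    refine tsum_congr fun k => ?_
    rw [hgdef]
    simp only [smul_pow]
    rw [smul_smul]
  have hms : ∀ k, AEStronglyMeasurable (g k) (volume.restrict (Set.Ioc (0:ℝ) t)) := fun k =>
    ((continuous_const.mul ((Complex.continuous_ofReal).pow _)).smul
      continuous_const).aestronglyMeasurable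
  set c : ℕ → NNReal := fun k => ‖(((2*k).factorial : ℂ))⁻¹ • ((t:ℂ) • B) ^ (2*k)‖₊ with hcdef
  have hbound : ∀ k, ∀ u ∈ Set.Ioc (0:ℝ) t, ‖g k u‖ ≤ (c k : ℝ) := by
    intro k u hu
    simp only [hcdef, coe_nnnorm, hgdef]
    have e1 : ‖((((2*k).factorial : ℂ))⁻¹ * (u:ℂ)^(2*k)) • B ^ (2*k)‖
        = ‖(((2*k).factorial : ℂ))⁻¹‖ * |u|^(2*k) * ‖B^(2*k)‖ := by
      rw [norm_smul, norm_mul, norm_pow, Complex.norm_real, Real.norm_eq_abs]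
    have e2 : ‖(((2*k).factorial : ℂ))⁻¹ • ((t:ℂ) • B) ^ (2*k)‖
        = ‖(((2*k).factorial : ℂ))⁻¹‖ * |t|^(2*k) * ‖B^(2*k)‖ := by
      rw [smul_pow, smul_smul, norm_smul, norm_mul, norm_pow, Complex.norm_real,
        Real.norm_eq_abs]
    have habs : |u| ≤ |t| := by
      rw [abs_of_pos hu.1, abs_of_nonneg ht]
      exact hu.2
    rw [e1, e2]
    refine mul_le_mul_of_nonneg_right ?_ (norm_nonneg _)
    exact mul_le_mul_of_nonneg_left (pow_le_pow_left₀ (abs_nonneg _) habs _) (norm_nonneg _)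
  have hlint : ∀ k, ∫⁻ u, ‖g k u‖₊ ∂(volume.restrict (Set.Ioc (0:ℝ) t))
      ≤ (c k : ENNReal) * ENNReal.ofReal t := by
    intro k
    calc ∫⁻ u, ‖g k u‖₊ ∂(volume.restrict (Set.Ioc (0:ℝ) t))
        ≤ ∫⁻ _, (c k : ENNReal) ∂(volume.restrict (Set.Ioc (0:ℝ) t)) := by
          refine lintegral_mono_ae ?_
          rw [ae_restrict_iff' measurableSet_Ioc]
          refine ae_of_all _ fun u hu => ?_
          have := hbound k u hu
          exact_mod_cast (by exact_mod_cast this : ‖g k u‖₊ ≤ c k)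
      _ = (c k : ENNReal) * volume (Set.Ioc (0:ℝ) t) := by
          rw [lintegral_const, Measure.restrict_apply_univ]
      _ = (c k : ENNReal) * ENNReal.ofReal t := by rw [Real.volume_Ioc, sub_zero]
  have hsumc : Summable c := by
    rw [← NNReal.summable_coe]
    simpa only [hcdef, coe_nnnorm] using summable_even_norm ((t:ℂ) • B)
  have hne : (∑' k, ∫⁻ u, ‖g k u‖₊ ∂(volume.restrict (Set.Ioc (0:ℝ) t))) ≠ ⊤ := by
    refine ne_top_of_le_ne_top ?_ (ENNReal.tsum_le_tsum hlint)
    rw [ENNReal.tsum_mul_right]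
    exact ENNReal.mul_ne_top (ENNReal.tsum_coe_ne_top_iff_summable.2 hsumc)
      ENNReal.ofReal_ne_top
  have hswap : (∫ u in Set.Ioc (0:ℝ) t, ∑' k, g k u) = ∑' k, ∫ u in Set.Ioc (0:ℝ) t, g k u :=
    integral_tsum hms hne
  have hterm : ∀ k, (∫ u in Set.Ioc (0:ℝ) t, g k u)
      = ((t:ℂ) * (((2*k+1).factorial : ℂ))⁻¹ * (t:ℂ)^(2*k)) • B ^ (2*k) := by
    intro k
    rw [← intervalIntegral.integral_of_le ht, hgdef]
    rw [intervalIntegral.integral_smul_const]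
    congr 1
    rw [intervalIntegral.integral_const_mul]
    have h1 : ∀ u : ℝ, ((u:ℂ))^(2*k) = (((u^(2*k) : ℝ)) : ℂ) := fun u => (Complex.ofReal_pow u (2*k)).symm
    simp only [h1]
    rw [intervalIntegral.integral_ofReal, integral_pow]
    have h2 : ((2*k+1).factorial : ℂ) = ((2*k+1 : ℕ) : ℂ) * ((2*k).factorial : ℂ) := by
      norm_cast
    have h3 : ((2*k).factorial : ℂ) ≠ 0 := Nat.cast_ne_zero.2 (Nat.factorial_ne_zero _)
    have h4 : ((2*k : ℕ) : ℂ) + 1 ≠ 0 := by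
      intro h
      have := congrArg Complex.re h
      push_cast at this
      norm_num at this
      linarith [(by positivity : (0:ℝ) ≤ (2*k : ℝ))]
    rw [h2]
    push_cast
    rw [zero_pow (by omega)]
    field_simp
    ring
  have hsummshc : Summable fun k : ℕ => (((2*k+1).factorial : ℂ))⁻¹ • ((t:ℂ) • B) ^ (2*k) := by
    refine Summable.of_norm_bounded (summable_even_norm ((t:ℂ)•B)) fun k => ?_
    rw [norm_smul, norm_smul]
    refine mul_le_mul_of_nonneg_right ?_ (norm_nonneg _)
    rw [norm_inv, norm_inv, Complex.norm_natCast, Complex.norm_natCast]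
    have hle : ((2*k).factorial : ℝ) ≤ ((2*k+1).factorial : ℝ) := by
      exact_mod_cast Nat.factorial_le (by omega)
    have hpos : (0:ℝ) < ((2*k).factorial : ℝ) := by exact_mod_cast Nat.factorial_pos _
    exact inv_anti₀ hpos hle
  calc G B t = ∫ u in Set.Ioc (0:ℝ) t, ∑' k, g k u := by
        rw [G, intervalIntegral.integral_of_le ht]
        exact setIntegral_congr_fun measurableSet_Ioc fun u _ => hcosh u
    _ = ∑' k, ∫ u in Set.Ioc (0:ℝ) t, g k u := hswap
    _ = ∑' k, ((t:ℂ) * (((2*k+1).factorial : ℂ))⁻¹ * (t:ℂ)^(2*k)) • B ^ (2*k) :=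
        tsum_congr hterm
    _ = (t:ℂ) • mshc ((t:ℂ) • B) := by
        rw [mshc, ← Summable.tsum_const_smul ((t:ℂ)) hsummshc]
        refine tsum_congr fun k => ?_
        rw [smul_pow, smul_smul, smul_smul]

end IntegralMcoshAux

/-- **Identity (eq.pr.22):** if `cosh(sB)` is invertible for all `s ∈ [0,t]`, then
`∫_0^t cosh(sB)⁻² ds = t ⬝ shc(tB) ⬝ cosh(tB)⁻¹`. -/
theorem integral_mcosh_inv_sq {n : ℕ}
    (B : Matrix (Fin n) (Fin n) ℂ) (t : ℝ) (ht : 0 ≤ t)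
    (hinv : ∀ s ∈ Set.Icc (0 : ℝ) t, IsUnit (mcosh ((s : ℂ) • B))) :
    (∫ s in (0 : ℝ)..t, ((mcosh ((s : ℂ) • B))⁻¹) ^ 2)
      = (t : ℂ) • (mshc ((t : ℂ) • B) * (mcosh ((t : ℂ) • B))⁻¹) := by
  have huIcc : Set.uIcc (0:ℝ) t = Set.Icc 0 t := Set.uIcc_of_le ht
  have hderiv : ∀ s ∈ Set.uIcc (0:ℝ) t,
      HasDerivAt (fun u : ℝ => IntegralMcoshAux.G B u * Ring.inverse (mcosh ((u:ℂ)•B)))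
        (Ring.inverse (mcosh ((s:ℂ)•B)) * Ring.inverse (mcosh ((s:ℂ)•B))) s := by
    intro s hs
    exact IntegralMcoshAux.hF B (hinv s (huIcc ▸ hs))
  have hcontR : ContinuousOn (fun s : ℝ => Ring.inverse (mcosh ((s:ℂ)•B)))
      (Set.uIcc (0:ℝ) t) := by
    intro s hs
    exact ((IntegralMcoshAux.hR B (hinv s (huIcc ▸ hs))).continuousAt).continuousWithinAt
  have hint := (hcontR.mul hcontR).intervalIntegrable (μ := volume)
  have ftc := intervalIntegral.integral_eq_sub_of_hasDerivAt hderiv hint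
  have hG0 : IntegralMcoshAux.G B 0 = 0 := intervalIntegral.integral_same
  rw [hG0, zero_mul, sub_zero] at ftc
  have hLHS : (∫ s in (0:ℝ)..t, ((mcosh ((s:ℂ)•B))⁻¹)^2)
      = ∫ s in (0:ℝ)..t,
          Ring.inverse (mcosh ((s:ℂ)•B)) * Ring.inverse (mcosh ((s:ℂ)•B)) := by
    refine intervalIntegral.integral_congr fun s hs => ?_
    rw [pow_two, Matrix.nonsing_inv_eq_ringInverse]
  rw [hLHS, ftc, IntegralMcoshAux.G_eq B ht, Matrix.nonsing_inv_eq_ringInverse,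
    smul_mul_assoc]
end
end

section
/- Let B be a real skew-symmetric n×n matrix (Bᵀ = −B) and denote by B_ℂ its entrywise complexification. Then det( cosh( √−1 · B_ℂ ) ) ≠ 0 and det( shc( √−1 · B_ℂ ) ) ≠ 0. -/
noncomputable section

open NormedSpace Matrix

lemma summable_shc_real (x : ℝ) :
    Summable (fun k : ℕ => (((2 * k + 1).factorial : ℝ))⁻¹ * x ^ (2 * k)) := by
  refine Summable.of_nonneg_of_le (fun k => ?_) (fun k => ?_)
    (Real.summable_pow_div_factorial (x ^ 2))
  · rw [pow_mul]; positivity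
  · rw [pow_mul, div_eq_inv_mul]
    refine mul_le_mul_of_nonneg_right ?_ (by positivity)
    exact inv_anti₀ (by positivity) (by exact_mod_cast Nat.factorial_le (by omega))

lemma shc_real_pos (x : ℝ) :
    0 < ∑' k : ℕ, (((2 * k + 1).factorial : ℝ))⁻¹ * x ^ (2 * k) := by
  refine Summable.tsum_pos (summable_shc_real x) (fun k => ?_) 0 (by norm_num)
  rw [pow_mul]; positivity

lemma mcosh_units_conj {n : ℕ} (u : (Matrix (Fin n) (Fin n) ℂ)ˣ)
    (X : Matrix (Fin n) (Fin n) ℂ) :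
    mcosh ((u : Matrix (Fin n) (Fin n) ℂ) * X * (↑u⁻¹ : Matrix (Fin n) (Fin n) ℂ))
      = (u : Matrix (Fin n) (Fin n) ℂ) * mcosh X * (↑u⁻¹ : Matrix (Fin n) (Fin n) ℂ) := by
  unfold mcosh
  rw [show -((u : Matrix (Fin n) (Fin n) ℂ) * X * ↑u⁻¹)
      = (u : Matrix (Fin n) (Fin n) ℂ) * (-X) * ↑u⁻¹ by simp [neg_mul, mul_neg],
    Matrix.exp_units_conj, Matrix.exp_units_conj]
  simp [Matrix.mul_smul, Matrix.smul_mul, Matrix.mul_add, Matrix.add_mul]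

lemma mcosh_diagonal {n : ℕ} (d : Fin n → ℂ) :
    mcosh (diagonal d) = diagonal (fun i => Complex.cosh (d i)) := by
  unfold mcosh
  rw [show -(diagonal d) = diagonal (fun i => -(d i)) from Matrix.diagonal_neg d,
    Matrix.exp_diagonal, Matrix.exp_diagonal, Matrix.diagonal_add, ← Matrix.diagonal_smul]
  refine congrArg diagonal (funext fun i => ?_)
  simp only [Pi.smul_apply, Pi.add_apply, Pi.coe_exp, smul_eq_mul, Complex.cosh,
    ← Complex.exp_eq_exp_ℂ]
  ring

lemma shc_term_eq (x : ℝ) :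
    (fun k : ℕ => (((2 * k + 1).factorial : ℂ))⁻¹ • ((x : ℂ)) ^ (2 * k))
      = fun k : ℕ => (((((2 * k + 1).factorial : ℝ))⁻¹ * x ^ (2 * k) : ℝ) : ℂ) := by
  funext k
  push_cast
  rw [smul_eq_mul]

lemma summable_shc_complex (x : ℝ) :
    Summable (fun k : ℕ => (((2 * k + 1).factorial : ℂ))⁻¹ • ((x : ℂ)) ^ (2 * k)) := by
  rw [shc_term_eq]
  exact Complex.summable_ofReal.2 (summable_shc_real x)

lemma shc_complex_ne_zero (x : ℝ) :
    (∑' k : ℕ, (((2 * k + 1).factorial : ℂ))⁻¹ • ((x : ℂ)) ^ (2 * k)) ≠ 0 := by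
  rw [shc_term_eq, ← Complex.ofReal_tsum]
  exact_mod_cast (shc_real_pos x).ne'

lemma summable_mshc_diagonal {n : ℕ} (lam : Fin n → ℝ) :
    Summable (fun k : ℕ => (((2 * k + 1).factorial : ℂ))⁻¹ •
      (diagonal fun i => ((lam i : ℝ) : ℂ)) ^ (2 * k)) := by
  refine Pi.summable.2 ?_
  intro i
  refine Pi.summable.2 ?_
  intro j
  by_cases h : i = j
  · subst h
    simpa [Matrix.smul_apply, Matrix.diagonal_pow, Matrix.diagonal_apply_eq]
      using summable_shc_complex (lam i)
  · simpa [Matrix.smul_apply, Matrix.diagonal_pow, Matrix.diagonal_apply_ne _ h]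
      using summable_zero

lemma mshc_diagonal {n : ℕ} (lam : Fin n → ℝ) :
    mshc (diagonal fun i => ((lam i : ℝ) : ℂ))
      = diagonal (fun i => ∑' k : ℕ,
          (((2 * k + 1).factorial : ℂ))⁻¹ • ((lam i : ℝ) : ℂ) ^ (2 * k)) := by
  unfold mshc
  have hs := summable_mshc_diagonal lam
  ext i j
  erw [tsum_apply hs, tsum_apply ((Pi.summable).1 hs i)]
  by_cases h : i = j
  · subst h
    simp [Matrix.smul_apply, Matrix.diagonal_pow, Matrix.diagonal_apply_eq]
  · simp [Matrix.smul_apply, Matrix.diagonal_pow, Matrix.diagonal_apply_ne _ h]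

lemma mshc_units_conj {n : ℕ} (u : (Matrix (Fin n) (Fin n) ℂ)ˣ)
    (X : Matrix (Fin n) (Fin n) ℂ)
    (hX : Summable (fun k : ℕ => (((2 * k + 1).factorial : ℂ))⁻¹ • X ^ (2 * k))) :
    mshc ((u : Matrix (Fin n) (Fin n) ℂ) * X * (↑u⁻¹ : Matrix (Fin n) (Fin n) ℂ))
      = (u : Matrix (Fin n) (Fin n) ℂ) * mshc X * (↑u⁻¹ : Matrix (Fin n) (Fin n) ℂ) := by
  unfold mshc
  set L : Matrix (Fin n) (Fin n) ℂ →L[ℂ] Matrix (Fin n) (Fin n) ℂ :=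
    LinearMap.toContinuousLinearMap
      ((LinearMap.mulRight ℂ (↑u⁻¹ : Matrix (Fin n) (Fin n) ℂ)).comp
        (LinearMap.mulLeft ℂ (u : Matrix (Fin n) (Fin n) ℂ))) with hL
  have hLapp : ∀ Y : Matrix (Fin n) (Fin n) ℂ,
      L Y = (u : Matrix (Fin n) (Fin n) ℂ) * Y * (↑u⁻¹ : Matrix (Fin n) (Fin n) ℂ) :=
    fun Y => rfl
  have h1 : (fun k : ℕ => (((2 * k + 1).factorial : ℂ))⁻¹ •
        ((u : Matrix (Fin n) (Fin n) ℂ) * X * (↑u⁻¹ : Matrix (Fin n) (Fin n) ℂ)) ^ (2 * k))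
      = fun k => L ((((2 * k + 1).factorial : ℂ))⁻¹ • X ^ (2 * k)) := by
    funext k
    rw [hLapp, u.conj_pow, ← smul_mul_assoc, ← mul_smul_comm]
  rw [h1, ← L.map_tsum hX, hLapp]

/-- **Remark A.2:** for a real skew-symmetric matrix `B`,
`det(cosh(√-1 B)) ≠ 0` and `det(shc(√-1 B)) ≠ 0`. -/
theorem det_mcosh_ne_zero_and_det_mshc_ne_zero {n : ℕ}
    (B : Matrix (Fin n) (Fin n) ℝ) (hB : Bᵀ = -B) :
    (mcosh (Complex.I • B.map Complex.ofReal)).det ≠ 0 ∧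
    (mshc (Complex.I • B.map Complex.ofReal)).det ≠ 0 := by
  set A : Matrix (Fin n) (Fin n) ℂ := Complex.I • B.map Complex.ofReal with hAdef
  have hA : A.IsHermitian := by
    rw [Matrix.IsHermitian]
    ext i j
    have hb : B j i = -(B i j) := by
      have := congrFun (congrFun hB i) j
      simpa [Matrix.transpose_apply, Matrix.neg_apply] using this
    simp only [hAdef, Matrix.conjTranspose_apply, Matrix.smul_apply, Matrix.map_apply,
      smul_eq_mul, star_mul', Complex.star_def, Complex.conj_I, Complex.conj_ofReal, hb]
    push_cast
    ring
  set U : Matrix (Fin n) (Fin n) ℂ := (hA.eigenvectorUnitary : Matrix (Fin n) (Fin n) ℂ)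
    with hUdef
  have h1 : U * star U = 1 := Matrix.mem_unitaryGroup_iff.mp hA.eigenvectorUnitary.2
  have h2 : star U * U = 1 := Matrix.mem_unitaryGroup_iff'.mp hA.eigenvectorUnitary.2
  set u : (Matrix (Fin n) (Fin n) ℂ)ˣ := ⟨U, star U, h1, h2⟩ with hudef
  set lam : Fin n → ℝ := hA.eigenvalues with hlam
  have hd : (RCLike.ofReal ∘ lam : Fin n → ℂ) = fun i => ((lam i : ℝ) : ℂ) := rfl
  have hspec : A = (u : Matrix (Fin n) (Fin n) ℂ) *
      (diagonal fun i => ((lam i : ℝ) : ℂ)) * (↑u⁻¹ : Matrix (Fin n) (Fin n) ℂ) := by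
    rw [← hd]
    exact hA.spectral_theorem
  have hdet : ∀ M : Matrix (Fin n) (Fin n) ℂ,
      ((u : Matrix (Fin n) (Fin n) ℂ) * M * (↑u⁻¹ : Matrix (Fin n) (Fin n) ℂ)).det = M.det := by
    intro M
    have huu : ((u : Matrix (Fin n) (Fin n) ℂ)).det *
        ((↑u⁻¹ : Matrix (Fin n) (Fin n) ℂ)).det = 1 := by
      rw [← Matrix.det_mul, Units.mul_inv, Matrix.det_one]
    rw [Matrix.det_mul, Matrix.det_mul, mul_comm ((u : Matrix (Fin n) (Fin n) ℂ)).det M.det,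
      mul_assoc, huu, mul_one]
  constructor
  · rw [hspec, mcosh_units_conj, hdet, mcosh_diagonal, Matrix.det_diagonal]
    refine Finset.prod_ne_zero_iff.2 fun i _ => ?_
    rw [← Complex.ofReal_cosh]
    exact_mod_cast (Real.cosh_pos (x := lam i)).ne'
  · rw [hspec, mshc_units_conj u _ (summable_mshc_diagonal lam), hdet, mshc_diagonal,
      Matrix.det_diagonal]
    exact Finset.prod_ne_zero_iff.2 fun i _ => shc_complex_ne_zero (lam i)
end
end
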